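/- Let n ≥ 3 and k ≥ 0 be integers and let L > 1 be a real number. A real number σ has the property that there exist real numbers a, b, not both zero, such that the function u(r) = a·r^k + b·r^{2−n−k} satisfies u(L) = 0 and u′(1) = −σ·u(1), if and only if σ = (k + (n+k−2)·L^{2k+n−2})/(L^{2k+n−2} − 1). -/

import Mathlib

lemma deriv_aux (a b : ℝ) (m₁ m₂ : ℤ) :
    deriv (fun r : ℝ => a * r ^ m₁ + b * r ^ m₂) 1 = a * m₁ + b * m₂ := by
  have h1 : HasDerivAt (fun r : ℝ => r ^ m₁) ((m₁ : ℝ) * (1:ℝ) ^ (m₁ - 1)) 1 :=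
    hasDerivAt_zpow m₁ 1 (Or.inl one_ne_zero)
  have h2 : HasDerivAt (fun r : ℝ => r ^ m₂) ((m₂ : ℝ) * (1:ℝ) ^ (m₂ - 1)) 1 :=
    hasDerivAt_zpow m₂ 1 (Or.inl one_ne_zero)
  have h := ((h1.const_mul a).add (h2.const_mul b)).deriv
  simp only [one_zpow, mul_one] at h
  exact h

theorem stmt_0 (n k : ℕ) (hn : 3 ≤ n) (L : ℝ) (hL : 1 < L) (σ : ℝ) :
    (∃ a b : ℝ, ¬ (a = 0 ∧ b = 0) ∧
      a * L ^ (k : ℤ) + b * L ^ ((2 : ℤ) - n - k) = 0 ∧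
      deriv (fun r : ℝ => a * r ^ (k : ℤ) + b * r ^ ((2 : ℤ) - n - k)) 1 =
        -σ * (a * (1 : ℝ) ^ (k : ℤ) + b * (1 : ℝ) ^ ((2 : ℤ) - n - k))) ↔
    σ = ((k : ℝ) + ((n : ℝ) + k - 2) * L ^ (2 * (k : ℤ) + n - 2)) /
        (L ^ (2 * (k : ℤ) + n - 2) - 1) := by
  have hL0 : (0:ℝ) < L := lt_trans one_pos hL
  have hLne : L ≠ 0 := ne_of_gt hL0
  have hT1 : 1 < L ^ (2 * (k:ℤ) + n - 2) := one_lt_zpow₀ hL (by omega)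
  have hTne : L ^ (2 * (k:ℤ) + n - 2) - 1 ≠ 0 := by linarith
  have hsplit : L ^ (k:ℤ) = L ^ ((2:ℤ) - n - k) * L ^ (2 * (k:ℤ) + n - 2) := by
    rw [← zpow_add₀ hLne]; ring_nf
  have hXpos : 0 < L ^ ((2:ℤ) - n - k) := zpow_pos hL0 _
  have hmcast : (((2:ℤ) - n - k : ℤ) : ℝ) = 2 - (n:ℝ) - k := by push_cast; ring
  constructor
  · rintro ⟨a, b, hab, h1, h2⟩
    rw [deriv_aux] at h2
    simp only [one_zpow, mul_one] at h2
    rw [hmcast] at h2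
    rw [hsplit] at h1
    have hb : b = -(a * L ^ (2 * (k:ℤ) + n - 2)) := by
      have h1' : (b) * L ^ ((2:ℤ) - n - k) = (-(a * L ^ (2 * (k:ℤ) + n - 2))) * L ^ ((2:ℤ) - n - k) := by
        linear_combination h1
      exact mul_right_cancel₀ (ne_of_gt hXpos) h1'
    have ha : a ≠ 0 := by
      rintro rfl
      exact hab ⟨rfl, by simpa using hb⟩
    rw [hb] at h2
    rw [eq_div_iff hTne]
    have key : a * (σ * (L ^ (2 * (k:ℤ) + n - 2) - 1)) =
        a * ((k:ℝ) + ((n:ℝ) + k - 2) * L ^ (2 * (k:ℤ) + n - 2)) := by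
      linear_combination -h2
    linarith [mul_left_cancel₀ ha key]
  · intro hσ
    refine ⟨L ^ ((2:ℤ) - n - k), -(L ^ ((2:ℤ) - n - k) * L ^ (2 * (k:ℤ) + n - 2)), ?_, ?_, ?_⟩
    · rintro ⟨h, -⟩; exact ne_of_gt hXpos h
    · rw [hsplit]; ring
    · rw [deriv_aux]
      simp only [one_zpow, mul_one]
      rw [hmcast, hσ]
      field_simp
      push_cast
      ring
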